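/- arXiv:1604.00457 — 4 statements merged into one kernel-verified Lean document; each statement's English description precedes it below -/
import Mathlib

section
/- Let α > β γ² > 0 with γ > 0. If real numbers F_i, e_i (i = 1..n) satisfy Σᵢ eᵢ² ≤ γ² Σᵢ Fᵢ² and constants λᵢ satisfy α/(1-c/2) ≤ λᵢ ≤ 2cβ with 0 < c < 2, then -Σᵢ λᵢ (Fᵢ² - eᵢFᵢ) ≤ -(α - βγ²) Σᵢ Fᵢ². -/
theorem lyapunov_derivative_bound (n : ℕ) (c α β γ : ℝ) (lam F e : Fin n → ℝ)
    (hc : 0 < c) (hc2 : c < 2) (hγ : 0 < γ)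
    (hαβγ : β * γ ^ 2 < α) (hβγ : 0 < β * γ ^ 2)
    (hlam : ∀ i, 0 < lam i)
    (hα : ∀ i, α ≤ (1 - c / 2) * lam i)
    (hβ : ∀ i, lam i / (2 * c) ≤ β)
    (he : ∑ i, e i ^ 2 ≤ γ ^ 2 * ∑ i, F i ^ 2) :
    -∑ i, lam i * (F i ^ 2 - e i * F i) ≤ -(α - β * γ ^ 2) * ∑ i, F i ^ 2 := by
  have h1 : -∑ i, lam i * (F i ^ 2 - e i * F i)
      ≤ ∑ i, (-α * F i ^ 2 + β * e i ^ 2) := by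
    rw [← Finset.sum_neg_distrib]
    apply Finset.sum_le_sum
    intro i _
    have hb : lam i ≤ 2 * c * β := by
      have := hβ i
      rw [div_le_iff₀ (by positivity)] at this
      linarith
    nlinarith [mul_nonneg (hlam i).le (sq_nonneg (c * F i - e i)),
      mul_nonneg (sub_nonneg.2 (hα i)) (sq_nonneg (F i)),
      mul_nonneg (sub_nonneg.2 hb) (sq_nonneg (e i)), hc.le, sq_nonneg (e i)]
  have h2 : ∑ i, (-α * F i ^ 2 + β * e i ^ 2)
      = -α * ∑ i, F i ^ 2 + β * ∑ i, e i ^ 2 := by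
    rw [Finset.sum_add_distrib, ← Finset.mul_sum, ← Finset.mul_sum]
  have hβpos : 0 < β := by nlinarith [pow_pos hγ 2]
  nlinarith [mul_le_mul_of_nonneg_left he hβpos.le]
end

section
/- If H : ℝⁿ → ℝ is real-analytic and its critical set S is contained in a compact set K, then the set of critical values H(S) is finite. -/
theorem critical_values_finite (n : ℕ) (H : (Fin n → ℝ) → ℝ)
    (hH : AnalyticOn ℝ H Set.univ)
    (S : Set (Fin n → ℝ)) (hS : S = {x | fderiv ℝ H x = 0})
    (K : Set (Fin n → ℝ)) (hK : IsCompact K) (hSK : S ⊆ K)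
    (hLoj : ∀ xs ∈ S, ∃ r > (0:ℝ), ∃ v ∈ Set.Ioo (0:ℝ) 1,
      ∀ x ∈ Metric.ball xs r, |H x - H xs| ^ v ≤ ‖fderiv ℝ H x‖) :
    (H '' S).Finite := by
  -- fderiv is continuous
  have hfd : Continuous (fderiv ℝ H) := by
    have h2 := (analyticOn_univ.mp hH).fderiv
    exact continuousOn_univ.mp h2.continuousOn
  -- S is closed
  have hclosed : IsClosed S := by
    rw [hS]
    exact isClosed_eq hfd continuous_const
  have hcS : IsCompact S := hK.of_isClosed_subset hclosed hSK
  -- locally constant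
  have hconst : ∀ xs ∈ S, ∃ r > (0:ℝ), ∀ x ∈ S ∩ Metric.ball xs r, H x = H xs := by
    intro xs hxs
    obtain ⟨r, hr, v, hv, hloj⟩ := hLoj xs hxs
    refine ⟨r, hr, fun x hx => ?_⟩
    have h1 := hloj x hx.2
    have h0 : fderiv ℝ H x = 0 := by
      have := hx.1; rw [hS] at this; exact this
    rw [h0, norm_zero] at h1
    have hnn : (0:ℝ) ≤ |H x - H xs| ^ v := Real.rpow_nonneg (abs_nonneg _) v
    have heq : |H x - H xs| ^ v = 0 := le_antisymm h1 hnn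
    have : |H x - H xs| = 0 := by
      rcases (Real.rpow_eq_zero (abs_nonneg _) (ne_of_gt hv.1)).mp heq with h
      exact h
    have := abs_eq_zero.mp this
    linarith
  -- choose radii
  choose! r hr hRc using hconst
  obtain ⟨t, hts, htf, hcov⟩ := hcS.elim_finite_subcover_image
    (fun xs hxs => Metric.isOpen_ball (x := xs) (ε := r xs))
    (fun x hx => Set.mem_biUnion hx (Metric.mem_ball_self (hr x hx)))
  refine Set.Finite.subset (htf.image H) ?_
  rintro - ⟨x, hx, rfl⟩
  obtain ⟨xs, hxs, hxball⟩ := Set.mem_iUnion₂.mp (hcov hx)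
  exact ⟨xs, hxs, (hRc xs (hts hxs) x ⟨hx, hxball⟩).symm⟩
end

section
/- Suppose e : [t_k, ∞) → ℝ is absolutely continuous with e(t_k) = 0 and |ė(t)| ≤ M·√(δ(t)) for all t, where √(δ(s))/√(δ(t')) ≤ √σ·e^{d_max T} for all s ≤ t' in [t_k, t_k + T]. If t' ∈ [t_k, t_k+T] is the first time with |e(t')| = γ·√(δ(t'))·e^{-d(t'-t_k)} for some γ > 0 and 0 < d ≤ d_max, then t' - t_k ≥ η where η is the unique positive solution of γ·e^{-dη}/(M√σ·e^{d_max T}) = η. -/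
theorem inter_event_lower_bound (M σ T γ d dmax tk t' η : ℝ)
    (hM : 0 < M) (hσ : 0 < σ) (hT : 0 < T) (hγ : 0 < γ)
    (hd : 0 < d) (hdmax : d ≤ dmax)
    (δ : ℝ → ℝ) (hδ : ∀ t, 0 < δ t)
    (hratio : ∀ s t₁, tk ≤ s → s ≤ t₁ → t₁ ≤ tk + T →
      Real.sqrt (δ s) / Real.sqrt (δ t₁) ≤ Real.sqrt σ * Real.exp (dmax * T))
    (e e' : ℝ → ℝ) (he0 : e tk = 0)
    (he : ∀ t, HasDerivAt e (e' t) t)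
    (he' : ∀ t, |e' t| ≤ M * Real.sqrt (δ t))
    (ht' : tk ≤ t' ∧ t' ≤ tk + T ∧
      |e t'| = γ * Real.sqrt (δ t') * Real.exp (-d * (t' - tk)))
    (hη : 0 < η ∧ γ * Real.exp (-d * η) / (M * Real.sqrt σ * Real.exp (dmax * T)) = η) :
    η ≤ t' - tk := by
  obtain ⟨ht1, ht2, heq⟩ := ht'
  obtain ⟨hη1, hη2⟩ := hη
  set τ := t' - tk with hτ
  have hτ0 : 0 ≤ τ := by linarith
  have hδ' : 0 < Real.sqrt (δ t') := Real.sqrt_pos.mpr (hδ t')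
  set C : ℝ := M * (Real.sqrt σ * Real.exp (dmax * T)) * Real.sqrt (δ t') with hC
  -- bound derivative on [tk, t']
  have hbound : ∀ x ∈ Set.Icc tk t', ‖e' x‖ ≤ C := by
    intro x hx
    have h1 := he' x
    have h2 := hratio x t' hx.1 hx.2 ht2
    have h3 : Real.sqrt (δ x) ≤ Real.sqrt σ * Real.exp (dmax * T) * Real.sqrt (δ t') := by
      rw [div_le_iff₀ hδ'] at h2; linarith
    calc ‖e' x‖ ≤ M * Real.sqrt (δ x) := h1
      _ ≤ M * (Real.sqrt σ * Real.exp (dmax * T) * Real.sqrt (δ t')) := by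
          exact mul_le_mul_of_nonneg_left h3 hM.le
      _ = C := by ring
  have hmvt : ‖e t' - e tk‖ ≤ C * ‖t' - tk‖ := by
    apply (convex_Icc tk t').norm_image_sub_le_of_norm_hasDerivWithin_le
      (fun x _ => (he x).hasDerivWithinAt) hbound
      (Set.left_mem_Icc.mpr ht1) (Set.right_mem_Icc.mpr ht1)
  rw [he0, sub_zero] at hmvt
  have hnorm : ‖t' - tk‖ = τ := by rw [Real.norm_eq_abs, abs_of_nonneg hτ0]
  rw [hnorm] at hmvt
  have hkey : γ * Real.sqrt (δ t') * Real.exp (-d * τ) ≤ C * τ := by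
    rw [← heq]; exact hmvt
  have hD : 0 < M * Real.sqrt σ * Real.exp (dmax * T) :=
    mul_pos (mul_pos hM (Real.sqrt_pos.mpr hσ)) (Real.exp_pos _)
  have hkey2 : γ * Real.exp (-d * τ) / (M * Real.sqrt σ * Real.exp (dmax * T)) ≤ τ := by
    rw [div_le_iff₀ hD]
    have : γ * Real.sqrt (δ t') * Real.exp (-d * τ) ≤
        M * (Real.sqrt σ * Real.exp (dmax * T)) * Real.sqrt (δ t') * τ := hkey
    nlinarith [hδ', Real.exp_pos (-d * τ)]
  by_contra h
  push_neg at h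
  have hexp : Real.exp (-d * η) < Real.exp (-d * τ) := by
    apply Real.exp_lt_exp.mpr; nlinarith
  have : η < γ * Real.exp (-d * τ) / (M * Real.sqrt σ * Real.exp (dmax * T)) := by
    rw [← hη2]
    gcongr
  linarith
end

section
/- Let L(x) = f(g(Λx)) + Σᵢ (dᵢ/λᵢ) ∫₀^{gᵢ(λᵢxᵢ)} gᵢ⁻¹(s) ds - θᵀ g(Λx), where f is C¹, gᵢ is the sigmoid, dᵢ, λᵢ > 0. Then the partial derivative satisfies ∂L/∂xᵢ (x) = λᵢ gᵢ'(λᵢxᵢ)·(dᵢ xᵢ + [∇f(g(Λx))]ᵢ - θᵢ); in particular ∇L(x) = 0 at every equilibrium x with -Dx - ∇f(g(Λx)) + θ = 0. -/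
open MeasureTheory

noncomputable def sg (z : ℝ) : ℝ := 1 / (1 + Real.exp (-z))

lemma sg_denom_pos (z : ℝ) : 0 < 1 + Real.exp (-z) := by positivity

lemma sg_pos (z : ℝ) : 0 < sg z := by
  unfold sg; positivity

lemma sg_lt_one (z : ℝ) : sg z < 1 := by
  unfold sg
  rw [div_lt_one (sg_denom_pos z)]
  linarith [Real.exp_pos (-z)]

lemma sg_hasDerivAt (z : ℝ) : HasDerivAt sg (sg z * (1 - sg z)) z := by
  have h1 : HasDerivAt (fun w : ℝ => 1 + Real.exp (-w)) (-Real.exp (-z)) z := by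
    have h := (Real.hasDerivAt_exp (-z)).comp z (hasDerivAt_neg z)
    have h2 := h.const_add (1 : ℝ)
    simpa [mul_comm] using h2
  have h2 := h1.inv (ne_of_gt (sg_denom_pos z))
  have heq : -(-Real.exp (-z)) / (1 + Real.exp (-z)) ^ 2 = sg z * (1 - sg z) := by
    unfold sg
    have := sg_denom_pos z
    field_simp
    ring
  rw [heq] at h2
  have e : sg = fun w => (1 + Real.exp (-w))⁻¹ := by funext w; simp [sg, one_div]
  exact h2.congr_of_eventuallyEq (Filter.Eventually.of_forall fun w => by simp [sg, one_div])

lemma sg_log (z : ℝ) : Real.log (sg z / (1 - sg z)) = z := by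
  have hd := sg_denom_pos z
  have h1 : 1 - sg z = Real.exp (-z) / (1 + Real.exp (-z)) := by
    unfold sg; field_simp; ring
  have h2 : sg z / (1 - sg z) = Real.exp z := by
    rw [h1]; unfold sg
    rw [div_div_div_cancel_right₀]
    · rw [one_div, ← Real.exp_neg, neg_neg]
    · exact ne_of_gt hd
  rw [h2, Real.log_exp]

lemma phi_contAt {s : ℝ} (h0 : 0 < s) (h1 : s < 1) :
    ContinuousAt (fun t : ℝ => Real.log (t / (1 - t))) s := by
  have hs1 : 1 - s ≠ 0 := by linarith
  have hdiv : ContinuousAt (fun t : ℝ => t / (1 - t)) s :=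
    continuousAt_id.div (continuousAt_const.sub continuousAt_id) hs1
  exact hdiv.log (by positivity)

lemma phi_intervalIntegrable {c : ℝ} (h0 : 0 < c) (h1 : c < 1) :
    IntervalIntegrable (fun s : ℝ => Real.log (s / (1 - s))) volume 0 c := by
  have key : IntegrableOn (fun s : ℝ => Real.log (s / (1 - s))) (Set.Ioc 0 (1/2 : ℝ)) volume := by
    have h := intervalIntegral.integrableOn_deriv_of_nonneg
      (g := fun t : ℝ => -(t * Real.log t + (1 - t) * Real.log (1 - t)))
      (g' := fun t : ℝ => -Real.log (t / (1 - t)))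
      (a := 0) (b := 1/2)
      ?hcont ?hderiv ?hpos
    · have h2 := h.neg'
      simp only [neg_neg] at h2
      exact h2
    case hcont =>
      apply (Continuous.continuousOn ?_)
      have hml : Continuous fun x : ℝ => x * Real.log x := Real.continuous_mul_log
      exact ((hml.add (hml.comp (continuous_const.sub continuous_id))).neg)
    case hderiv =>
      intro t ht
      obtain ⟨ht0, ht1⟩ := ht
      have ht1' : (0:ℝ) < 1 - t := by linarith
      have hA : HasDerivAt (fun x : ℝ => x * Real.log x) (Real.log t + 1) t :=
        Real.hasDerivAt_mul_log (ne_of_gt ht0)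
      have hB : HasDerivAt (fun x : ℝ => (1 - x) * Real.log (1 - x))
          ((Real.log (1 - t) + 1) * (-1)) t := by
        have := (Real.hasDerivAt_mul_log (ne_of_gt ht1')).comp t
          ((hasDerivAt_const t (1:ℝ)).sub (hasDerivAt_id t))
        exact this.congr_deriv (by ring)
      have h := (hA.add hB).neg
      show HasDerivAt (fun x : ℝ => -(x * Real.log x + (1 - x) * Real.log (1 - x)))
        (-Real.log (t / (1 - t))) t
      have heq : -Real.log (t / (1 - t)) = -((Real.log t + 1) + (Real.log (1 - t) + 1) * (-1)) := by
        rw [Real.log_div (ne_of_gt ht0) (ne_of_gt ht1')]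
        ring
      rw [heq]
      exact h
    case hpos =>
      intro t ht
      obtain ⟨ht0, ht1⟩ := ht
      show (0:ℝ) ≤ -Real.log (t / (1 - t))
      have : t / (1 - t) ≤ 1 := by
        rw [div_le_one (by linarith)]
        linarith
      have hlog : Real.log (t / (1 - t)) ≤ 0 := Real.log_nonpos (div_nonneg ht0.le (by linarith)) this
      linarith
  -- now split
  have meas : AEStronglyMeasurable (fun s : ℝ => Real.log (s / (1 - s))) volume := by
    apply Measurable.aestronglyMeasurable
    exact Real.measurable_log.comp (measurable_id.div (measurable_const.sub measurable_id))
  rcases le_or_gt c (1/2 : ℝ) with hc | hc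
  · rw [intervalIntegrable_iff_integrableOn_Ioc_of_le h0.le]
    exact key.mono_set (Set.Ioc_subset_Ioc le_rfl hc)
  · have i1 : IntervalIntegrable (fun s : ℝ => Real.log (s / (1 - s))) volume 0 (1/2) := by
      rw [intervalIntegrable_iff_integrableOn_Ioc_of_le (by norm_num)]
      exact key
    have i2 : IntervalIntegrable (fun s : ℝ => Real.log (s / (1 - s))) volume (1/2) c := by
      apply ContinuousOn.intervalIntegrable
      intro t ht
      rw [Set.uIcc_of_le hc.le] at ht
      exact (phi_contAt (by linarith [ht.1]) (by rcases ht with ⟨_, h⟩; linarith)).continuousWithinAt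
    exact i1.trans i2
theorem lyapunov_partial_derivative (n : ℕ) (f : (Fin n → ℝ) → ℝ)
    (hf : ContDiff ℝ 1 f) (d lam θ : Fin n → ℝ)
    (hd : ∀ i, 0 < d i) (hlam : ∀ i, 0 < lam i)
    (g : ℝ → ℝ) (hg : ∀ z, g z = 1 / (1 + Real.exp (-z)))
    (L : (Fin n → ℝ) → ℝ)
    (hL : ∀ x, L x = f (fun i => g (lam i * x i)) +
      (∑ i, (d i / lam i) * ∫ s in (0:ℝ)..(g (lam i * x i)), Real.log (s / (1 - s))) -
      ∑ i, θ i * g (lam i * x i)) :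
    (∀ (x : Fin n → ℝ) (i : Fin n),
      HasDerivAt (fun s => L (Function.update x i s))
        (lam i * (g (lam i * x i) * (1 - g (lam i * x i))) *
          (d i * x i + fderiv ℝ f (fun j => g (lam j * x j)) (Pi.single i 1) - θ i))
        (x i)) ∧
    (∀ x : Fin n → ℝ,
      (∀ i, -d i * x i - fderiv ℝ f (fun j => g (lam j * x j)) (Pi.single i 1) + θ i = 0) →
      ∀ i, HasDerivAt (fun s => L (Function.update x i s)) 0 (x i)) := by
  have hgsg : g = sg := funext fun z => by rw [hg z]; rfl
  subst hgsg
  have main : ∀ (x : Fin n → ℝ) (i : Fin n),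
      HasDerivAt (fun s => L (Function.update x i s))
        (lam i * (sg (lam i * x i) * (1 - sg (lam i * x i))) *
          (d i * x i + fderiv ℝ f (fun j => sg (lam j * x j)) (Pi.single i 1) - θ i))
        (x i) := by
    intro x i
    have hlami := hlam i
    set y : Fin n → ℝ := fun j => sg (lam j * x j) with hy
    -- inner derivative
    have hinner : HasDerivAt (fun s : ℝ => sg (lam i * s))
        (lam i * (sg (lam i * x i) * (1 - sg (lam i * x i)))) (x i) := by
      have h2 : HasDerivAt (fun s : ℝ => sg (lam i * s))
          (sg (lam i * x i) * (1 - sg (lam i * x i)) * (lam i * 1)) (x i) :=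
        (sg_hasDerivAt (lam i * x i)).comp (x i) ((hasDerivAt_id (x i)).const_mul (lam i))
      have : lam i * (sg (lam i * x i) * (1 - sg (lam i * x i)))
          = sg (lam i * x i) * (1 - sg (lam i * x i)) * (lam i * 1) := by ring
      rw [this]
      exact h2
    -- the argument rewriting
    have harg : ∀ s : ℝ, (fun j => sg (lam j * Function.update x i s j))
        = Function.update y i (sg (lam i * s)) := by
      intro s
      funext j
      by_cases hj : j = i
      · subst hj; simp
      · simp [Function.update_of_ne hj, hy]
    -- A term
    have hupd : HasDerivAt (fun t : ℝ => Function.update y i t) (Pi.single i 1)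
        (sg (lam i * x i)) := hasDerivAt_update y i (sg (lam i * x i))
    have hfd : HasFDerivAt f (fderiv ℝ f y) (Function.update y i (sg (lam i * x i))) := by
      have : Function.update y i (sg (lam i * x i)) = y := Function.update_eq_self i y
      rw [this]
      exact (hf.differentiable one_ne_zero).differentiableAt.hasFDerivAt
    have h1 : HasDerivAt (fun t : ℝ => f (Function.update y i t))
        (fderiv ℝ f y (Pi.single i 1)) (sg (lam i * x i)) := hfd.comp_hasDerivAt _ hupd
    have hA : HasDerivAt (fun s : ℝ => f (Function.update y i (sg (lam i * s))))
        (fderiv ℝ f y (Pi.single i 1) * (lam i * (sg (lam i * x i) * (1 - sg (lam i * x i)))))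
        (x i) := by have := h1.comp (x i) hinner; exact this
    -- B term
    have hc0 : 0 < sg (lam i * x i) := sg_pos _
    have hc1 : sg (lam i * x i) < 1 := sg_lt_one _
    have hFTC : HasDerivAt (fun u : ℝ => ∫ t in (0:ℝ)..u, Real.log (t / (1 - t)))
        (lam i * x i) (sg (lam i * x i)) := by
      have h := intervalIntegral.integral_hasDerivAt_right
        (phi_intervalIntegrable hc0 hc1)
        ((Measurable.aestronglyMeasurable
          (Real.measurable_log.comp
            (measurable_id.div (measurable_const.sub measurable_id)))).stronglyMeasurableAtFilter)
        (phi_contAt hc0 hc1)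
      rw [sg_log (lam i * x i)] at h
      exact h
    have hBi : HasDerivAt (fun s : ℝ => (d i / lam i) *
        ∫ t in (0:ℝ)..(sg (lam i * s)), Real.log (t / (1 - t)))
        ((d i / lam i) * ((lam i * x i) *
          (lam i * (sg (lam i * x i) * (1 - sg (lam i * x i)))))) (x i) :=
      (hFTC.comp (x i) hinner).const_mul (d i / lam i)
    have hB : HasDerivAt (fun s : ℝ => ∑ j, (d j / lam j) *
        ∫ t in (0:ℝ)..(sg (lam j * Function.update x i s j)), Real.log (t / (1 - t)))
        ((d i / lam i) * ((lam i * x i) *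
          (lam i * (sg (lam i * x i) * (1 - sg (lam i * x i)))))) (x i) := by
      have hsum : HasDerivAt (fun s : ℝ => ∑ j, (d j / lam j) *
          ∫ t in (0:ℝ)..(sg (lam j * Function.update x i s j)), Real.log (t / (1 - t)))
          (∑ j, if j = i then (d i / lam i) * ((lam i * x i) *
            (lam i * (sg (lam i * x i) * (1 - sg (lam i * x i))))) else 0) (x i) := by
        apply HasDerivAt.fun_sum
        intro j _
        by_cases hj : j = i
        · subst hj
          rw [if_pos rfl]
          have heq : (fun s : ℝ => (d j / lam j) *
              ∫ t in (0:ℝ)..(sg (lam j * Function.update x j s j)), Real.log (t / (1 - t)))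
              = fun s : ℝ => (d j / lam j) *
              ∫ t in (0:ℝ)..(sg (lam j * s)), Real.log (t / (1 - t)) := by
            funext s; rw [Function.update_self]
          rw [heq]
          exact hBi
        · rw [if_neg hj]
          have heq : (fun s : ℝ => (d j / lam j) *
              ∫ t in (0:ℝ)..(sg (lam j * Function.update x i s j)), Real.log (t / (1 - t)))
              = fun _ : ℝ => (d j / lam j) *
              ∫ t in (0:ℝ)..(sg (lam j * x j)), Real.log (t / (1 - t)) := by
            funext s; rw [Function.update_of_ne hj]
          rw [heq]
          exact hasDerivAt_const _ _
      rwa [Finset.sum_ite_eq' Finset.univ i, if_pos (Finset.mem_univ i)] at hsum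
    -- C term
    have hC : HasDerivAt (fun s : ℝ => ∑ j, θ j * sg (lam j * Function.update x i s j))
        (θ i * (lam i * (sg (lam i * x i) * (1 - sg (lam i * x i))))) (x i) := by
      have hsum : HasDerivAt (fun s : ℝ => ∑ j, θ j * sg (lam j * Function.update x i s j))
          (∑ j, if j = i then θ i * (lam i * (sg (lam i * x i) * (1 - sg (lam i * x i))))
            else 0) (x i) := by
        apply HasDerivAt.fun_sum
        intro j _
        by_cases hj : j = i
        · subst hj
          rw [if_pos rfl]
          have heq : (fun s : ℝ => θ j * sg (lam j * Function.update x j s j))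
              = fun s : ℝ => θ j * sg (lam j * s) := by
            funext s; rw [Function.update_self]
          rw [heq]
          exact hinner.const_mul (θ j)
        · rw [if_neg hj]
          have heq : (fun s : ℝ => θ j * sg (lam j * Function.update x i s j))
              = fun _ : ℝ => θ j * sg (lam j * x j) := by
            funext s; rw [Function.update_of_ne hj]
          rw [heq]
          exact hasDerivAt_const _ _
      rwa [Finset.sum_ite_eq' Finset.univ i, if_pos (Finset.mem_univ i)] at hsum
    -- assemble
    have hfun : (fun s : ℝ => L (Function.update x i s))
        = fun s : ℝ => f (Function.update y i (sg (lam i * s)))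
          + (∑ j, (d j / lam j) *
              ∫ t in (0:ℝ)..(sg (lam j * Function.update x i s j)), Real.log (t / (1 - t)))
          - ∑ j, θ j * sg (lam j * Function.update x i s j) := by
      funext s
      rw [hL, harg s]
    rw [hfun]
    have H := (hA.add hB).sub hC
    have hl : d i / lam i * lam i = d i := div_mul_cancel₀ _ hlami.ne'
    exact H.congr_deriv (by linear_combination (lam i * (sg (lam i * x i) * (1 - sg (lam i * x i))) * x i) * hl)
  refine ⟨main, fun x hx i => ?_⟩
  have h0 : d i * x i + fderiv ℝ f (fun j => sg (lam j * x j)) (Pi.single i 1) - θ i = 0 := by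
    have := hx i
    linarith
  have := main x i
  rw [h0, mul_zero] at this
  exact this
end
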